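/- Let (M,d) be a proper metric space, μ a Borel probability measure, ρ : [0,∞) → [0,∞) non-decreasing continuous with ρ(0)=0 and lim_{t→∞} ρ(t) = ∞. Assume F(m) = ∫ ρ(d(x,m)) dμ(x) is finite for all m and F is not constant. Then there exists a closed ball K = closure(B_{r₁}(m₁)) such that inf_{m ∈ K} F(m) = inf_{m ∈ M} F(m) and, for every m ∉ K, F(m) > inf_{m ∈ K} F(m); consequently every minimizer of F lies in K. -/

import Mathlib

open MeasureTheory Set Filter

/-- Coercivity (Proposition 1, unbounded-loss case): there is a closed ball
`K = closure (B_{r₁}(m₁))` on which the infimum of `F` equals the global infimum, and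
outside of which `F` is strictly larger; consequently every minimizer of `F` lies in `K`. -/
theorem coercivity_unbounded_loss
    {M : Type*} [MetricSpace M] [ProperSpace M] [MeasurableSpace M] [BorelSpace M]
    (μ : Measure M) [IsProbabilityMeasure μ]
    (ρ : ℝ → ℝ)
    (hmono : MonotoneOn ρ (Ici 0))
    (hcont : ContinuousOn ρ (Ici 0))
    (hρ0 : ρ 0 = 0)
    (hρnonneg : ∀ t ∈ Ici (0:ℝ), 0 ≤ ρ t)
    (htop : Tendsto ρ atTop atTop)
    (F : M → ℝ)
    (hF : ∀ m, F m = ∫ x, ρ (dist x m) ∂μ)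
    (hint : ∀ m : M, Integrable (fun x => ρ (dist x m)) μ)
    (hnotconst : ¬ ∀ m m' : M, F m = F m') :
    ∃ (m₁ : M) (r₁ : ℝ), 0 < r₁ ∧
      sInf (F '' closure (Metric.ball m₁ r₁)) = sInf (Set.range F) ∧
      (∀ m : M, m ∉ closure (Metric.ball m₁ r₁) →
        sInf (F '' closure (Metric.ball m₁ r₁)) < F m) ∧
      (∀ m : M, (∀ m' : M, F m ≤ F m') → m ∈ closure (Metric.ball m₁ r₁)) := by
  -- basic positivity facts
  have hFnonneg : ∀ m, 0 ≤ F m := by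
    intro m
    rw [hF m]
    exact integral_nonneg fun x => hρnonneg _ dist_nonneg
  -- base point
  obtain ⟨m₀⟩ : Nonempty M := by
    by_contra h
    exact hnotconst fun m => absurd ⟨m⟩ h
  have hrange_ne : (Set.range F).Nonempty := ⟨F m₀, mem_range_self _⟩
  have hbdd : BddBelow (Set.range F) := ⟨0, by rintro y ⟨m, rfl⟩; exact hFnonneg m⟩
  set I : ℝ := sInf (Set.range F) with hIdef
  have hI0 : 0 ≤ I := le_csInf hrange_ne (by rintro y ⟨m, rfl⟩; exact hFnonneg m)
  set c : ℝ := I + 1 with hcdef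
  have hcpos : 0 < c := by positivity
  have hIc : I < c := by simp [hcdef]
  -- choose T with ρ t ≥ 2c for t ≥ T, and T ≥ 0
  obtain ⟨T₀, hT₀⟩ : ∃ T, ∀ t ≥ T, 2 * c ≤ ρ t := (htop.eventually_ge_atTop (2 * c)).exists_forall_of_atTop
  set T : ℝ := max T₀ 0 with hTdef
  have hT : ∀ t ≥ T, 2 * c ≤ ρ t := fun t ht => hT₀ t (le_trans (le_max_left _ _) ht)
  -- choose N with μ (closedBall m₀ N) > 1/2
  have hmono_ball : Monotone fun n : ℕ => Metric.closedBall m₀ n := fun a b hab =>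
    Metric.closedBall_subset_closedBall (by exact_mod_cast hab)
  have htend := tendsto_measure_iUnion_atTop (μ := μ) hmono_ball
  rw [Metric.iUnion_closedBall_nat] at htend
  have : μ univ = 1 := measure_univ
  rw [this] at htend
  obtain ⟨N, hN⟩ : ∃ n : ℕ, (1/2 : ENNReal) < μ (Metric.closedBall m₀ n) :=
    (htend.eventually (lt_mem_nhds (by norm_num : (1/2 : ENNReal) < 1))).exists
  set B : Set M := Metric.closedBall m₀ N with hBdef
  have hBmeas : MeasurableSet B := measurableSet_closedBall
  have hBfin : μ B ≠ ⊤ := (measure_lt_top μ B).ne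
  have hBhalf : (1/2 : ℝ) ≤ (μ B).toReal := by
    have h1 : ((1/2 : ENNReal)).toReal ≤ (μ B).toReal :=
      ENNReal.toReal_mono hBfin hN.le
    simpa using h1
  set r₁ : ℝ := (N : ℝ) + T + 1 with hr₁def
  have hr₁pos : 0 < r₁ := by
    have : (0:ℝ) ≤ N := Nat.cast_nonneg _
    have : (0:ℝ) ≤ T := le_max_right _ _
    positivity
  -- coercivity estimate
  have hcoer : ∀ m : M, r₁ ≤ dist m₀ m → c ≤ F m := by
    intro m hm
    have hlow : ∀ x ∈ B, 2 * c ≤ ρ (dist x m) := by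
      intro x hx
      have hxN : dist x m₀ ≤ N := Metric.mem_closedBall.mp hx
      have : T ≤ dist x m := by
        have htri : dist m₀ m ≤ dist m₀ x + dist x m := dist_triangle _ _ _
        have : dist m₀ x ≤ N := by rwa [dist_comm]
        simp only [hr₁def] at hm
        linarith
      exact hT _ this
    have h1 : 2 * c * (μ B).toReal ≤ ∫ x in B, ρ (dist x m) ∂μ :=
      by
        have h := setIntegral_ge_of_const_le hBmeas hBfin hlow (hint m).integrableOn
        simp only [smul_eq_mul] at h
        rw [mul_comm]
        exact h
    have h2 : ∫ x in B, ρ (dist x m) ∂μ ≤ ∫ x, ρ (dist x m) ∂μ :=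
      integral_mono_measure Measure.restrict_le_self
        (Filter.Eventually.of_forall fun x => hρnonneg _ dist_nonneg) (hint m)
    have h3 : c ≤ 2 * c * (μ B).toReal := by nlinarith
    rw [hF m]
    linarith
  -- membership criterion
  have hmem : ∀ m : M, F m < c → m ∈ closure (Metric.ball m₀ r₁) := by
    intro m hm
    by_contra hnot
    have hdist : r₁ ≤ dist m₀ m := by
      by_contra hlt
      push_neg at hlt
      exact hnot (subset_closure (by rwa [Metric.mem_ball, dist_comm]))
    exact absurd (hcoer m hdist) (not_le.mpr hm)
  set K : Set M := closure (Metric.ball m₀ r₁) with hKdef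
  have hKne : (F '' K).Nonempty := ⟨F m₀, m₀, subset_closure (Metric.mem_ball_self hr₁pos), rfl⟩
  have hKbdd : BddBelow (F '' K) := ⟨0, by rintro y ⟨m, _, rfl⟩; exact hFnonneg m⟩
  have hKsub : F '' K ⊆ Set.range F := by rintro y ⟨m, _, rfl⟩; exact mem_range_self _
  have hge : I ≤ sInf (F '' K) := csInf_le_csInf hbdd hKne hKsub
  have hle : sInf (F '' K) ≤ I := by
    refine le_of_forall_pos_le_add fun ε hε => ?_
    set δ : ℝ := min ε 1 with hδdef
    have hδpos : 0 < δ := lt_min hε one_pos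
    obtain ⟨y, ⟨m, rfl⟩, hy⟩ : ∃ y ∈ Set.range F, y < I + δ :=
      exists_lt_of_csInf_lt hrange_ne (by linarith)
    have hmc : F m < c := by
      have : δ ≤ 1 := min_le_right _ _
      simp only [hcdef]
      linarith
    have hmK : m ∈ K := hmem m hmc
    have : sInf (F '' K) ≤ F m := csInf_le hKbdd ⟨m, hmK, rfl⟩
    have hδε : δ ≤ ε := min_le_left _ _
    linarith
  have hinf : sInf (F '' K) = I := le_antisymm hle hge
  refine ⟨m₀, r₁, hr₁pos, hinf, ?_, ?_⟩
  · intro m hm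
    have hdist : r₁ ≤ dist m₀ m := by
      by_contra hlt
      push_neg at hlt
      exact hm (subset_closure (by rwa [Metric.mem_ball, dist_comm]))
    have := hcoer m hdist
    rw [hinf]
    linarith
  · intro m hmin
    have hFmI : F m ≤ I := le_csInf hrange_ne (by rintro y ⟨m', rfl⟩; exact hmin m')
    exact hmem m (by linarith)
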